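/- arXiv:2603.20929 — 3 statements merged into one kernel-verified Lean document; each statement's English description precedes it below -/
import Mathlib

section
/- Let a, b be real numbers, s* > 0 a real number, and c a complex number, and suppose the complex number λ satisfies λ = (-a + ib + c)/(s* + a + ib), where s* + a + ib ≠ 0. If |c|² + 2|c|·√(a² + b²) < (2a + s*)·s*, then |λ| < 1. -/
open Complex

/-- Key algebraic inequality for local stability of the sequential CAVI Jacobian. -/
theorem stmt_0 (a b s : ℝ) (hs : 0 < s) (c lam : ℂ)
    (hden : (s : ℂ) + a + b * Complex.I ≠ 0)
    (hlam : lam = (-(a : ℂ) + b * Complex.I + c) / ((s : ℂ) + a + b * Complex.I))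
    (hineq : ‖c‖ ^ 2 + 2 * ‖c‖ * Real.sqrt (a ^ 2 + b ^ 2)
      < (2 * a + s) * s) :
    ‖lam‖ < 1 := by
  have hdpos : 0 < ‖((s : ℂ) + a + b * Complex.I)‖ :=
    norm_pos_iff.mpr hden
  rw [hlam, norm_div, div_lt_one hdpos]
  have h1 : ‖(-(a : ℂ) + b * Complex.I + c)‖
      ≤ Real.sqrt (a ^ 2 + b ^ 2) + ‖c‖ := by
    refine le_trans (norm_add_le _ _) ?_
    have : ‖(-(a : ℂ) + b * Complex.I)‖ = Real.sqrt (a ^ 2 + b ^ 2) := by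
      rw [Complex.norm_def, Complex.normSq_apply]
      norm_num
      ring_nf
    rw [this]
  have h2 : ‖((s : ℂ) + a + b * Complex.I)‖
      = Real.sqrt ((s + a) ^ 2 + b ^ 2) := by
    rw [Complex.norm_def, Complex.normSq_apply]
    norm_num
    ring_nf
  have hr0 : 0 ≤ Real.sqrt (a ^ 2 + b ^ 2) := Real.sqrt_nonneg _
  have hc0 : 0 ≤ ‖c‖ := norm_nonneg c
  have hsq : (Real.sqrt (a ^ 2 + b ^ 2) + ‖c‖) ^ 2 < (s + a) ^ 2 + b ^ 2 := by
    have h := Real.sq_sqrt (by positivity : (0:ℝ) ≤ a ^ 2 + b ^ 2)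
    nlinarith [h]
  have h3 : Real.sqrt (a ^ 2 + b ^ 2) + ‖c‖ < Real.sqrt ((s + a) ^ 2 + b ^ 2) := by
    exact (Real.lt_sqrt (by positivity)).mpr hsq
  rw [h2]
  exact lt_of_le_of_lt h1 h3
end

section
/- Let M be a real symmetric positive definite p×p matrix, D_α a diagonal matrix with diagonal entries in (0,1), and B a diagonal matrix with nonnegative entries. Suppose δ ∈ (0,1) satisfies, for all unit vectors y ∈ ℝᵖ: yᵀ B M² B y ≤ δ · yᵀ M y and yᵀ B² y ≤ δ · yᵀ (D_α^{-1} − I) y. Then for all unit vectors y, yᵀ B (M − I) D_α (M − I) B y ≤ δ · yᵀ (D_α^{-1} + M − I) y. -/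
open Matrix

/-- Lemma A.2 of the paper. -/
theorem stmt_5 (p : ℕ) (M : Matrix (Fin p) (Fin p) ℝ) (dα b : Fin p → ℝ)
    (hM : M.IsSymm) (hMpd : M.PosDef)
    (hdα : ∀ i, dα i ∈ Set.Ioo (0 : ℝ) 1) (hb : ∀ i, 0 ≤ b i)
    (δ : ℝ) (hδ : δ ∈ Set.Ioo (0 : ℝ) 1)
    (h1 : ∀ y : Fin p → ℝ, y ⬝ᵥ y = 1 →
      y ⬝ᵥ (Matrix.diagonal b * M ^ 2 * Matrix.diagonal b).mulVec y ≤ δ * (y ⬝ᵥ M.mulVec y))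
    (h2 : ∀ y : Fin p → ℝ, y ⬝ᵥ y = 1 →
      y ⬝ᵥ ((Matrix.diagonal b) ^ 2).mulVec y ≤
        δ * (y ⬝ᵥ (Matrix.diagonal (fun i => (dα i)⁻¹) - 1).mulVec y)) :
    ∀ y : Fin p → ℝ, y ⬝ᵥ y = 1 →
      y ⬝ᵥ (Matrix.diagonal b * (M - 1) * Matrix.diagonal dα * (M - 1) *
          Matrix.diagonal b).mulVec y ≤
        δ * (y ⬝ᵥ (Matrix.diagonal (fun i => (dα i)⁻¹) + M - 1).mulVec y) := by
  intro y hy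
  have hmove : ∀ (A : Matrix (Fin p) (Fin p) ℝ), Aᵀ = A → ∀ u v : Fin p → ℝ,
      u ⬝ᵥ A *ᵥ v = (A *ᵥ u) ⬝ᵥ v := by
    intro A hA u v
    rw [Matrix.dotProduct_mulVec, ← Matrix.mulVec_transpose, hA]
  set B := Matrix.diagonal b with hB
  set D := Matrix.diagonal dα with hD
  have hBsym : Bᵀ = B := Matrix.diagonal_transpose b
  have hMsym : Mᵀ = M := hM
  have hMIsym : (M - 1)ᵀ = M - 1 := by rw [Matrix.transpose_sub, hMsym, Matrix.transpose_one]
  set x := B *ᵥ y with hx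
  set w := (M - 1) *ᵥ x with hw
  -- Claim A : LHS = w ⬝ᵥ D *ᵥ w
  have eqL : y ⬝ᵥ (B * (M - 1) * D * (M - 1) * B) *ᵥ y = w ⬝ᵥ D *ᵥ w := by
    rw [← Matrix.mulVec_mulVec, ← Matrix.mulVec_mulVec, ← Matrix.mulVec_mulVec,
      ← Matrix.mulVec_mulVec, hmove B hBsym, ← hx, hmove (M - 1) hMIsym, ← hw,
      hmove D (by rw [hD, Matrix.diagonal_transpose]), hmove (M - 1) hMIsym]
  -- Claim B : w ⬝ᵥ D *ᵥ w ≤ w ⬝ᵥ w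
  have claimB : w ⬝ᵥ D *ᵥ w ≤ w ⬝ᵥ w := by
    unfold dotProduct
    apply Finset.sum_le_sum
    intro i _
    have h1 := (hdα i).1
    have h2 := (hdα i).2
    have : (D *ᵥ w) i = dα i * w i := by simp [hD, Matrix.mulVec_diagonal]
    rw [this]
    nlinarith [sq_nonneg (w i)]
  -- Claim C
  have claimC : w ⬝ᵥ w = x ⬝ᵥ (M ^ 2) *ᵥ x - 2 * (x ⬝ᵥ M *ᵥ x) + x ⬝ᵥ x := by
    have hMx : w = M *ᵥ x - x := by rw [hw, Matrix.sub_mulVec, Matrix.one_mulVec]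
    have hsq : (M *ᵥ x) ⬝ᵥ (M *ᵥ x) = x ⬝ᵥ (M ^ 2) *ᵥ x := by
      rw [pow_two, ← Matrix.mulVec_mulVec, hmove M hMsym]
      exact dotProduct_comm _ _
    have hcomm : (M *ᵥ x) ⬝ᵥ x = x ⬝ᵥ M *ᵥ x := dotProduct_comm _ _
    rw [hMx, sub_dotProduct, dotProduct_sub, dotProduct_sub, hsq, hcomm]
    ring
  have hMxnonneg : 0 ≤ x ⬝ᵥ M *ᵥ x := hMpd.posSemidef.dotProduct_mulVec_nonneg x
  have eq1 : y ⬝ᵥ (B * M ^ 2 * B) *ᵥ y = x ⬝ᵥ (M ^ 2) *ᵥ x := by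
    rw [← Matrix.mulVec_mulVec, ← Matrix.mulVec_mulVec, hmove B hBsym, ← hx]
  have eq2 : y ⬝ᵥ (B ^ 2) *ᵥ y = x ⬝ᵥ x := by
    rw [pow_two, ← Matrix.mulVec_mulVec, hmove B hBsym, ← hx, hmove B hBsym]
  have h1' := h1 y hy
  have h2' := h2 y hy
  rw [eq1] at h1'
  rw [eq2] at h2'
  have expand2 : y ⬝ᵥ (Matrix.diagonal (fun i => (dα i)⁻¹) - 1) *ᵥ y
      = y ⬝ᵥ (Matrix.diagonal (fun i => (dα i)⁻¹)) *ᵥ y - 1 := by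
    rw [Matrix.sub_mulVec, Matrix.one_mulVec, dotProduct_sub, hy]
  have expandR : y ⬝ᵥ (Matrix.diagonal (fun i => (dα i)⁻¹) + M - 1) *ᵥ y
      = y ⬝ᵥ (Matrix.diagonal (fun i => (dα i)⁻¹)) *ᵥ y + y ⬝ᵥ M *ᵥ y - 1 := by
    rw [Matrix.sub_mulVec, Matrix.add_mulVec, Matrix.one_mulVec, dotProduct_sub,
      dotProduct_add, hy]
  rw [expand2] at h2'
  rw [eqL, expandR]
  linarith [claimB, claimC]
end

section
/- For a chi-squared random variable Z with n degrees of freedom and any t > 0, P(Z − n ≥ 2√(nt) + 2t) ≤ e^{−t} and P(n − Z ≥ 2√(nt)) ≤ e^{−t}. -/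
open MeasureTheory ProbabilityTheory
open MeasureTheory Real Set ProbabilityTheory
open scoped ENNReal


lemma key_log_one_add {x : ℝ} (hx : 0 ≤ x) : x - x ^ 2 / 2 ≤ Real.log (1 + x) := by
  set f : ℝ → ℝ := fun y => Real.log (1 + y) - y + y ^ 2 / 2 with hf
  have hderiv : ∀ y ∈ Set.Ici (0:ℝ), HasDerivAt f (1 / (1 + y) - 1 + y) y := by
    intro y hy
    have hy0 : (0:ℝ) ≤ y := hy
    have h1 : HasDerivAt (fun y : ℝ => 1 + y) 1 y := by
      simpa using (hasDerivAt_id y).const_add (1:ℝ)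
    have h2 : HasDerivAt (fun y : ℝ => Real.log (1 + y)) (1 / (1 + y)) y := by
      simpa [one_div] using h1.log (by linarith : (0:ℝ) < 1 + y).ne'
    have h3 : HasDerivAt (fun y : ℝ => y ^ 2 / 2) y y := by
      simpa using (hasDerivAt_pow 2 y).div_const 2
    exact (h2.sub (hasDerivAt_id y)).add h3
  have hmono : MonotoneOn f (Set.Ici (0:ℝ)) := by
    refine monotoneOn_of_deriv_nonneg (convex_Ici 0) ?_ ?_ ?_
    · exact fun y hy => (hderiv y hy).continuousAt.continuousWithinAt
    · intro y hy
      rw [interior_Ici] at hy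
      exact ((hderiv y (Set.mem_Ici.mpr (le_of_lt hy))).differentiableAt.differentiableWithinAt)
    · intro y hy
      rw [interior_Ici] at hy
      rw [(hderiv y (Set.mem_Ici.mpr (le_of_lt hy))).deriv]
      have h1y : (0:ℝ) < 1 + y := by simp only [Set.mem_Ioi] at hy; linarith
      have : 1 / (1 + y) - 1 + y = y ^ 2 / (1 + y) := by field_simp; ring
      rw [this]; exact div_nonneg (sq_nonneg y) h1y.le
  have h0 : f 0 ≤ f x := hmono (Set.mem_Ici.mpr (le_refl 0)) (Set.mem_Ici.mpr hx) hx
  simp only [hf] at h0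
  simp at h0
  linarith

lemma key_log_one_sub {x : ℝ} (hx : 0 ≤ x) (hx1 : x < 1) :
    -Real.log (1 - x) ≤ x + x ^ 2 / (2 * (1 - x)) := by
  set f : ℝ → ℝ := fun y => y + y ^ 2 / (2 * (1 - y)) + Real.log (1 - y) with hf
  have hderiv : ∀ y ∈ Set.Ico (0:ℝ) 1,
      HasDerivAt f (1 + (2 * y * (2 * (1 - y)) - y ^ 2 * (-2)) / (2 * (1 - y)) ^ 2
        + (-1) / (1 - y)) y := by
    intro y hy
    have h1y : (0:ℝ) < 1 - y := by simp [Set.mem_Ico] at hy; linarith [hy.2]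
    have h1 : HasDerivAt (fun y : ℝ => 1 - y) (-1) y := by
      simpa using (hasDerivAt_id y).const_sub (1:ℝ)
    have h2 : HasDerivAt (fun y : ℝ => 2 * (1 - y)) (-2) y := by
      simpa using h1.const_mul (2:ℝ)
    have h3 : HasDerivAt (fun y : ℝ => y ^ 2 / (2 * (1 - y)))
        ((2 * y * (2 * (1 - y)) - y ^ 2 * (-2)) / (2 * (1 - y)) ^ 2) y := by
      have := (hasDerivAt_pow 2 y).div h2 (by linarith : (0:ℝ) < 2*(1-y)).ne'
      refine this.congr_deriv ?_
      norm_num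
    have h4 : HasDerivAt (fun y : ℝ => Real.log (1 - y)) ((-1) / (1 - y)) y := by
      simpa using h1.log h1y.ne'
    exact ((hasDerivAt_id y).add h3).add h4
  have hmono : MonotoneOn f (Set.Ico (0:ℝ) 1) := by
    refine monotoneOn_of_deriv_nonneg (convex_Ico 0 1) ?_ ?_ ?_
    · exact fun y hy => (hderiv y hy).continuousAt.continuousWithinAt
    · intro y hy
      rw [interior_Ico] at hy
      exact ((hderiv y ⟨hy.1.le, hy.2⟩).differentiableAt.differentiableWithinAt)
    · intro y hy
      rw [interior_Ico] at hy
      rw [(hderiv y ⟨hy.1.le, hy.2⟩).deriv]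
      have h1y : (0:ℝ) < 1 - y := by linarith [hy.2]
      have : 1 + (2 * y * (2 * (1 - y)) - y ^ 2 * (-2)) / (2 * (1 - y)) ^ 2
          + (-1) / (1 - y) = y ^ 2 / (2 * (1 - y) ^ 2) := by field_simp; ring
      rw [this]; exact div_nonneg (sq_nonneg y) (by positivity)
  have h0 : f 0 ≤ f x := hmono ⟨le_refl 0, one_pos⟩ ⟨hx, hx1⟩ hx
  simp only [hf] at h0
  simp at h0
  linarith


lemma gamma_exp_lintegral {a r l : ℝ} (ha : 0 < a) (hr : 0 < r) (hl : l < r) :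
    ∫⁻ x, ENNReal.ofReal (Real.exp (l * x)) ∂(gammaMeasure a r)
      = ENNReal.ofReal ((r / (r - l)) ^ a) := by
  have hs : 0 < r - l := by linarith
  have hmeas : Measurable (fun x : ℝ => ENNReal.ofReal (Real.exp (l * x))) :=
    (measurable_id'.const_mul l).exp.ennreal_ofReal
  have hgm : Measurable (gammaPDF a r) := (measurable_gammaPDFReal a r).ennreal_ofReal
  rw [gammaMeasure, lintegral_withDensity_eq_lintegral_mul _ hgm hmeas]
  have hsplit : ∀ x : ℝ, (gammaPDF a r * fun x => ENNReal.ofReal (Real.exp (l * x))) x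
      = Set.indicator (Ici 0) (fun x => ENNReal.ofReal
        (r ^ a / Real.Gamma a * (x ^ (a - 1) * Real.exp (-((r - l) * x))))) x := by
    intro x
    rcases lt_or_ge x 0 with hx | hx
    · rw [Set.indicator_of_notMem (by simp [hx.not_ge] : x ∉ Ici (0:ℝ))]
      simp [gammaPDF_of_neg hx]
    · rw [Set.indicator_of_mem (Set.mem_Ici.mpr hx)]
      simp only [Pi.mul_apply, gammaPDF_of_nonneg hx]
      rw [← ENNReal.ofReal_mul (by positivity)]
      rw [mul_assoc, mul_assoc, ← Real.exp_add]
      congr 2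
      ring
  simp only [hsplit]
  rw [lintegral_indicator measurableSet_Ici]
  rw [setLIntegral_congr (Ioi_ae_eq_Ici (a := (0:ℝ))).symm]
  have hint : IntegrableOn
      (fun x : ℝ => r ^ a / Real.Gamma a * (x ^ (a - 1) * Real.exp (-((r - l) * x))))
      (Ioi 0) volume := by
    apply Integrable.const_mul
    have := integrableOn_rpow_mul_exp_neg_mul_rpow (p := 1) (s := a - 1) (b := r - l)
      (by linarith) one_pos hs
    have h2 : ∀ x : ℝ, -((r - l) * x) = (l - r) * x := fun x => by ring
    simp only [h2]
    simpa [Real.rpow_one, neg_mul, IntegrableOn] using this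
  rw [← ofReal_integral_eq_lintegral_ofReal hint]
  · congr 1
    rw [integral_const_mul, integral_rpow_mul_exp_neg_mul_Ioi ha hs]
    have hΓ : Real.Gamma a ≠ 0 := (Real.Gamma_pos_of_pos ha).ne'
    have hcalc : r ^ a / Real.Gamma a * ((1 / (r - l)) ^ a * Real.Gamma a)
        = r ^ a * (1 / (r - l)) ^ a := by
      field_simp
    rw [hcalc, ← Real.mul_rpow hr.le (by positivity), mul_one_div]
  · refine (ae_restrict_iff' measurableSet_Ioi).mpr (ae_of_all _ fun x hx => ?_)
    have : (0:ℝ) < x := hx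
    positivity


lemma chernoff_gamma {Ω : Type*} [MeasurableSpace Ω] (μ : Measure Ω)
    (Z : Ω → ℝ) (hZmeas : Measurable Z) {a r : ℝ} (ha : 0 < a) (hr : 0 < r)
    (hZ : μ.map Z = gammaMeasure a r) {l : ℝ} (hl : l < r) (c : ℝ)
    (S : Set Ω) (hS : ∀ ω ∈ S, l * c ≤ l * Z ω) :
    μ S ≤ ENNReal.ofReal (Real.exp (-(l * c)) * (r / (r - l)) ^ a) := by
  have hsub : S ⊆ {ω | ENNReal.ofReal (Real.exp (l * c))
      ≤ ENNReal.ofReal (Real.exp (l * Z ω))} := fun ω hω =>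
    ENNReal.ofReal_le_ofReal (Real.exp_le_exp.mpr (hS ω hω))
  have hmark := mul_meas_ge_le_lintegral₀
    (μ := μ) (f := fun ω => ENNReal.ofReal (Real.exp (l * Z ω)))
    (((hZmeas.const_mul l).exp.ennreal_ofReal).aemeasurable)
    (ENNReal.ofReal (Real.exp (l * c)))
  have hlint : ∫⁻ ω, ENNReal.ofReal (Real.exp (l * Z ω)) ∂μ
      = ENNReal.ofReal ((r / (r - l)) ^ a) := by
    rw [← gamma_exp_lintegral ha hr hl, ← hZ,
      lintegral_map ((measurable_id'.const_mul l).exp.ennreal_ofReal) hZmeas]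
  rw [hlint] at hmark
  have h1 : μ S ≤ μ {ω | ENNReal.ofReal (Real.exp (l * c))
      ≤ ENNReal.ofReal (Real.exp (l * Z ω))} := measure_mono hsub
  have hεpos : (0:ℝ≥0∞) < ENNReal.ofReal (Real.exp (l * c)) :=
    ENNReal.ofReal_pos.mpr (Real.exp_pos _)
  have h2 : μ {ω | ENNReal.ofReal (Real.exp (l * c))
      ≤ ENNReal.ofReal (Real.exp (l * Z ω))}
      ≤ ENNReal.ofReal ((r / (r - l)) ^ a) / ENNReal.ofReal (Real.exp (l * c)) := by
    rw [ENNReal.le_div_iff_mul_le (Or.inl hεpos.ne') (Or.inl ENNReal.ofReal_ne_top)]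
    rw [mul_comm]
    exact hmark
  refine (h1.trans h2).trans (le_of_eq ?_)
  rw [← ENNReal.ofReal_div_of_pos (Real.exp_pos _)]
  congr 1
  rw [div_eq_mul_inv, ← Real.exp_neg, mul_comm]


/-- Laurent–Massart concentration inequality for a chi-squared random variable with `n`
degrees of freedom (chi-squared = Gamma(n/2, 1/2)). -/
theorem stmt_14 {Ω : Type*} [MeasurableSpace Ω] (μ : Measure Ω) [IsProbabilityMeasure μ]
    (n : ℕ) (hn : 0 < n) (Z : Ω → ℝ) (hZmeas : Measurable Z)
    (hZ : μ.map Z = gammaMeasure ((n : ℝ) / 2) (1 / 2)) (t : ℝ) (ht : 0 < t) :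
    μ {ω | 2 * Real.sqrt (n * t) + 2 * t ≤ Z ω - n} ≤ ENNReal.ofReal (Real.exp (-t)) ∧
    μ {ω | 2 * Real.sqrt (n * t) ≤ (n : ℝ) - Z ω} ≤ ENNReal.ofReal (Real.exp (-t)) := by
  have hn' : (0:ℝ) < n := Nat.cast_pos.mpr hn
  set m : ℝ := Real.sqrt n with hm_def
  set s : ℝ := Real.sqrt t with hs_def
  have hm : 0 < m := Real.sqrt_pos.mpr hn'
  have hs : 0 < s := Real.sqrt_pos.mpr ht
  have hN : m ^ 2 = (n:ℝ) := Real.sq_sqrt hn'.le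
  have hT : s ^ 2 = t := Real.sq_sqrt ht.le
  have hms : Real.sqrt ((n:ℝ) * t) = m * s := by
    rw [Real.sqrt_mul hn'.le]
  have ha : (0:ℝ) < (n:ℝ) / 2 := by positivity
  have hr : (0:ℝ) < 1 / 2 := by norm_num
  constructor
  · -- upper tail
    set l : ℝ := s / (m + 2 * s) with hl_def
    have hd : (0:ℝ) < m + 2 * s := by positivity
    have hl_pos : 0 < l := by positivity
    have hl_half : l < 1 / 2 := by
      rw [hl_def, div_lt_iff₀ hd]
      nlinarith
    have h1x : (0:ℝ) < 1 - 2 * l := by linarith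
    set c : ℝ := (n:ℝ) + (2 * (m * s) + 2 * t) with hc_def
    have hbound := chernoff_gamma μ Z hZmeas ha hr hZ (l := l) hl_half c
      {ω | 2 * Real.sqrt (↑n * t) + 2 * t ≤ Z ω - ↑n}
      (by
        intro ω hω
        simp only [Set.mem_setOf_eq, hms] at hω
        have hcz : c ≤ Z ω := by rw [hc_def]; linarith
        exact mul_le_mul_of_nonneg_left hcz hl_pos.le)
    refine hbound.trans (ENNReal.ofReal_le_ofReal ?_)
    have hbase : (1:ℝ) / 2 / (1 / 2 - l) = 1 / (1 - 2 * l) := by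
      rw [div_eq_div_iff (ne_of_gt (by linarith)) h1x.ne']; ring
    rw [hbase, Real.rpow_def_of_pos (by positivity : (0:ℝ) < 1 / (1 - 2 * l)),
      ← Real.exp_add, Real.exp_le_exp, one_div, Real.log_inv]
    have hkey := key_log_one_sub (by positivity : (0:ℝ) ≤ 2 * l) (by linarith : 2 * l < 1)
    have heq : ((n:ℝ) / 2) * (2 * l + (2 * l) ^ 2 / (2 * (1 - 2 * l))) - l * c = -t := by
      rw [hc_def, hl_def, ← hN, ← hT]
      have h1x' : (1:ℝ) - 2 * (s / (m + 2 * s)) = m / (m + 2 * s) := by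
        field_simp
        ring
      rw [h1x']
      field_simp
      ring
    have hmul : -Real.log (1 - 2 * l) * ((n:ℝ) / 2)
        ≤ (2 * l + (2 * l) ^ 2 / (2 * (1 - 2 * l))) * ((n:ℝ) / 2) :=
      mul_le_mul_of_nonneg_right hkey (by positivity)
    nlinarith [hmul, heq]
  · -- lower tail
    set θ : ℝ := s / m with hθ_def
    have hθ : 0 < θ := by positivity
    set l : ℝ := -θ with hl_def
    have hl_half : l < 1 / 2 := by rw [hl_def]; linarith
    set c : ℝ := (n:ℝ) - 2 * (m * s) with hc_def
    have hbound := chernoff_gamma μ Z hZmeas ha hr hZ (l := l) hl_half c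
      {ω | 2 * Real.sqrt (↑n * t) ≤ (n:ℝ) - Z ω}
      (by
        intro ω hω
        simp only [Set.mem_setOf_eq, hms] at hω
        have hcz : Z ω ≤ c := by rw [hc_def]; linarith
        exact mul_le_mul_of_nonpos_left hcz (by rw [hl_def]; linarith))
    refine hbound.trans (ENNReal.ofReal_le_ofReal ?_)
    have hbase : (1:ℝ) / 2 / (1 / 2 - l) = 1 / (1 + 2 * θ) := by
      rw [hl_def, div_eq_div_iff (ne_of_gt (by linarith : (0:ℝ) < 1/2 - -θ)) (ne_of_gt (by linarith : (0:ℝ) < 1 + 2*θ))]; ring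
    rw [hbase, Real.rpow_def_of_pos (by positivity : (0:ℝ) < 1 / (1 + 2 * θ)),
      ← Real.exp_add, Real.exp_le_exp, one_div, Real.log_inv]
    have hkey := key_log_one_add (by positivity : (0:ℝ) ≤ 2 * θ)
    have heq : ((n:ℝ) / 2) * (2 * θ - (2 * θ) ^ 2 / 2) - (-(l * c)) = t := by
      rw [hc_def, hl_def, hθ_def, ← hN, ← hT]
      field_simp
      ring
    have hmul : -Real.log (1 + 2 * θ) * ((n:ℝ) / 2)
        ≤ -(2 * θ - (2 * θ) ^ 2 / 2) * ((n:ℝ) / 2) :=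
      mul_le_mul_of_nonneg_right (by linarith) (by positivity)
    nlinarith [hmul, heq]
end
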